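/- arXiv:0901.2186 — 3 statements merged into one kernel-verified Lean document; each statement's English description precedes it below -/
import Mathlib

section
/- For each positive integer i, the map α_i(x) = 1/(x+i) maps Ω into Ω, each α_i is injective, the images α_i(Ω) for distinct i are pairwise disjoint, and Ω is the disjoint union of the images α_i(Ω) over all i ∈ ℕ. -/
/-- `Ω`, the set of irrationals in `[0,1]`. -/
def Omega : Set ℝ := {x | x ∈ Set.Icc (0 : ℝ) 1 ∧ Irrational x}

/-- The branch maps `α_i(x) = 1/(x+i)`. -/
noncomputable def alphaMap (i : ℕ+) (x : ℝ) : ℝ := 1 / (x + (i : ℕ))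

lemma omega_strict {x : ℝ} (hx : x ∈ Omega) : 0 < x ∧ x < 1 ∧ Irrational x := by
  obtain ⟨⟨h0, h1⟩, hirr⟩ := hx
  have hx0 : x ≠ 0 := by
    have := hirr.ne_int 0; simpa using this
  have hx1 : x ≠ 1 := by
    have := hirr.ne_int 1; simpa using this
  exact ⟨h0.lt_of_ne (Ne.symm hx0), h1.lt_of_ne hx1, hirr⟩

lemma alpha_mem_Ioo {i : ℕ+} {x : ℝ} (hx : x ∈ Omega) :
    alphaMap i x ∈ Set.Ioo (1 / ((i : ℕ) + 1) : ℝ) (1 / (i : ℕ)) := by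
  obtain ⟨h0, h1, _⟩ := omega_strict hx
  have hi : (1 : ℝ) ≤ (i : ℕ) := by exact_mod_cast i.one_le
  have hipos : (0 : ℝ) < (i : ℕ) := lt_of_lt_of_le one_pos hi
  constructor
  · rw [alphaMap, div_lt_div_iff₀ (by linarith) (by linarith)]
    linarith
  · rw [alphaMap, div_lt_div_iff₀ (by linarith) hipos]
    linarith

lemma alpha_irrational {i : ℕ+} {x : ℝ} (hx : x ∈ Omega) : Irrational (alphaMap i x) := by
  obtain ⟨_, hirr⟩ := hx
  have h1 : Irrational (x + (i : ℕ)) := hirr.add_natCast _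
  have h2 : Irrational (x + (i : ℕ))⁻¹ := h1.inv
  simpa [alphaMap, one_div] using h2

lemma alpha_maps : ∀ i : ℕ+, Set.MapsTo (alphaMap i) Omega Omega := by
  intro i x hx
  obtain ⟨hlo, hhi⟩ := alpha_mem_Ioo (i := i) hx
  have hi : (1 : ℝ) ≤ (i : ℕ) := by exact_mod_cast i.one_le
  have h1 : (1 / ((i : ℕ) + 1) : ℝ) > 0 := by positivity
  have h2 : (1 / (i : ℕ) : ℝ) ≤ 1 := by
    rw [div_le_one (by linarith)]; exact hi
  exact ⟨⟨le_of_lt (lt_trans h1 hlo), le_of_lt (lt_of_lt_of_le hhi h2)⟩,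
    alpha_irrational hx⟩

/-- `{α_i : i ∈ ℕ}` is a branching function system on `Ω`: each `α_i` maps `Ω`
into `Ω` injectively, the images are pairwise disjoint, and their union is `Ω`. -/
theorem alpha_branching_function_system :
    (∀ i : ℕ+, Set.MapsTo (alphaMap i) Omega Omega) ∧
    (∀ i : ℕ+, Set.InjOn (alphaMap i) Omega) ∧
    (∀ i j : ℕ+, i ≠ j → Disjoint (alphaMap i '' Omega) (alphaMap j '' Omega)) ∧
    (⋃ i : ℕ+, alphaMap i '' Omega) = Omega := by
  refine ⟨alpha_maps, ?_, ?_, ?_⟩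
  · intro i x hx y hy h
    obtain ⟨hx0, hx1, _⟩ := omega_strict hx
    obtain ⟨hy0, hy1, _⟩ := omega_strict hy
    have hi : (1 : ℝ) ≤ (i : ℕ) := by exact_mod_cast i.one_le
    rw [alphaMap, alphaMap, div_eq_div_iff (by linarith) (by linarith)] at h
    linarith
  · intro i j hij
    -- WLOG via a symmetric helper
    have key : ∀ a b : ℕ+, (a : ℕ) < (b : ℕ) →
        Disjoint (alphaMap a '' Omega) (alphaMap b '' Omega) := by
      intro a b hab
      rw [Set.disjoint_left]
      rintro z ⟨x, hx, rfl⟩ ⟨y, hy, hzy⟩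
      have h1 := alpha_mem_Ioo (i := a) hx
      have h2 := alpha_mem_Ioo (i := b) hy
      rw [hzy] at h2
      have hb : (0 : ℝ) < (b : ℕ) := by exact_mod_cast b.pos
      have ha1b : ((a : ℕ) : ℝ) + 1 ≤ (b : ℕ) := by exact_mod_cast hab
      have : (1 / (b : ℕ) : ℝ) ≤ 1 / ((a : ℕ) + 1) :=
        one_div_le_one_div_of_le (by linarith) ha1b
      have := h2.2.trans_le this
      exact absurd h1.1 (not_lt.mpr this.le)
    rcases lt_or_gt_of_ne (fun h : (i : ℕ) = (j : ℕ) => hij (PNat.coe_injective h)) with h | h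
    · exact key i j h
    · exact (key j i h).symm
  · apply Set.Subset.antisymm
    · intro z hz
      simp only [Set.mem_iUnion] at hz
      obtain ⟨i, x, hx, rfl⟩ := hz
      exact alpha_maps i hx
    · intro y hy
      obtain ⟨hy0, hy1, hyirr⟩ := omega_strict hy
      set t : ℝ := 1 / y with ht
      have htirr : Irrational t := by
        simpa [ht, one_div] using hyirr.inv
      have ht1 : 1 < t := by
        rw [ht, lt_div_iff₀ hy0]; linarith
      set n : ℤ := ⌊t⌋ with hn
      have hn1 : 1 ≤ n := by
        rw [hn]; exact Int.le_floor.mpr (by exact_mod_cast ht1.le)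
      set x : ℝ := t - n with hx
      have hxirr : Irrational x := by
        simpa [hx, sub_eq_add_neg] using htirr.add_intCast (-n)
      have hx0 : 0 ≤ x := by
        rw [hx]; have := Int.floor_le t; linarith
      have hx1 : x < 1 := by
        rw [hx]; have := Int.lt_floor_add_one t; linarith
      have hxΩ : x ∈ Omega := ⟨⟨hx0, hx1.le⟩, hxirr⟩
      set i : ℕ+ := ⟨n.toNat, by omega⟩ with hi
      have hin : ((i : ℕ) : ℝ) = (n : ℝ) := by
        have h : ((i : ℕ) : ℤ) = n := by
          simp [hi]; omega
        exact_mod_cast h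
      simp only [Set.mem_iUnion]
      refine ⟨i, x, hxΩ, ?_⟩
      rw [alphaMap, hin]
      have : x + (n : ℝ) = t := by rw [hx]; ring
      rw [this, ht, one_div_one_div]
end

section
/- Two irrational numbers x and y are related by a modular transformation (x = (ay+b)/(cy+d) with a,b,c,d ∈ ℤ and ad - bc = ±1) if and only if their continued fraction expansions eventually coincide, i.e. there exist m, n ≥ 0 such that the shifted sequences σ^m(CFE(x)) = σ^n(CFE(y)). -/
/-- The Gauss map `τ(x) = 1/x - ⌊1/x⌋`. -/
noncomputable def gaussMap (x : ℝ) : ℝ := Int.fract (1 / x)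

/-- The `n`-th partial quotient (indexed from `0`) of the continued fraction
expansion of a real `x` (taking the fractional part of `x` first):
`a_{n+1}(x) = ⌊1/τⁿ({x})⌋`. -/
noncomputable def pq (x : ℝ) (n : ℕ) : ℤ := ⌊1 / (gaussMap^[n] (Int.fract x))⌋

namespace Serret

lemma irr_fract {x : ℝ} (hx : Irrational x) : Irrational (Int.fract x) := by
  have := hx.sub_intCast ⌊x⌋
  rwa [Int.self_sub_floor] at this

lemma irr_gauss {x : ℝ} (hx : Irrational x) : Irrational (gaussMap x) := by
  have : Irrational (1 / x) := by simpa [one_div] using hx.inv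
  exact irr_fract this

lemma pq_congr {x y : ℝ} (h : Int.fract x = Int.fract y) : pq x = pq y := by
  unfold pq; rw [h]

lemma pq_shift (x : ℝ) (n : ℕ) : pq x (n + 1) = pq (gaussMap (Int.fract x)) n := by
  unfold pq
  rw [show Int.fract (gaussMap (Int.fract x)) = gaussMap (Int.fract x) from Int.fract_fract _,
    ← Function.iterate_succ_apply]

lemma iter_mem : ∀ (n : ℕ) (x : ℝ),
    0 ≤ gaussMap^[n] (Int.fract x) ∧ gaussMap^[n] (Int.fract x) < 1
  | 0, _ => ⟨Int.fract_nonneg _, Int.fract_lt_one _⟩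
  | (n+1), x => by
      rw [Function.iterate_succ_apply]
      exact iter_mem n (1 / Int.fract x)

lemma fract_iter (x : ℝ) (n : ℕ) :
    Int.fract (gaussMap^[n] (Int.fract x)) = gaussMap^[n] (Int.fract x) :=
  Int.fract_eq_self.2 (iter_mem n x)

lemma irr_iter {x : ℝ} (hx : Irrational x) (n : ℕ) : Irrational (gaussMap^[n] (Int.fract x)) := by
  induction n with
  | zero => exact irr_fract hx
  | succ n ih => rw [Function.iterate_succ_apply']; exact irr_gauss ih

lemma pq_iter (x : ℝ) (m : ℕ) : ∀ k, pq x (m + k) = pq (gaussMap^[m] (Int.fract x)) k := by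
  induction m with
  | zero =>
      intro k
      simpa using congrFun (pq_congr (Int.fract_fract x).symm) k
  | succ m ih =>
      intro k
      have h1 : m + 1 + k = m + (k + 1) := by omega
      rw [h1, ih (k+1), pq_shift, fract_iter, Function.iterate_succ_apply']

def TailEq (x y : ℝ) : Prop := ∃ m n : ℕ, ∀ k : ℕ, pq x (m + k) = pq y (n + k)

lemma TailEq.symm {x y : ℝ} (h : TailEq x y) : TailEq y x := by
  obtain ⟨m, n, h⟩ := h; exact ⟨n, m, fun k => (h k).symm⟩

lemma TailEq.trans {x y z : ℝ} (h1 : TailEq x y) (h2 : TailEq y z) : TailEq x z := by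
  obtain ⟨m, n, h1⟩ := h1; obtain ⟨m', n', h2⟩ := h2
  refine ⟨m + m', n' + n, fun k => ?_⟩
  have a1 := h1 (m' + k)
  have a2 := h2 (n + k)
  rw [show m + (m' + k) = m + m' + k from by omega,
    show n + (m' + k) = m' + (n + k) from by omega] at a1
  rw [show n' + (n + k) = n' + n + k from by omega] at a2
  exact a1.trans a2

lemma tailEq_of_pq_eq {x y : ℝ} (h : pq x = pq y) : TailEq x y :=
  ⟨0, 0, fun k => by rw [h]⟩

lemma pq_one_add {z : ℝ} (h0 : 0 ≤ z) (h1 : z < 1) (k : ℕ) :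
    pq z (1 + k) = pq (gaussMap z) k := by
  rw [show 1 + k = k + 1 from by omega, pq_shift, Int.fract_eq_self.2 ⟨h0, h1⟩]


lemma tail_inv_gt_one {x : ℝ} (h1 : 1 < x) : TailEq (1/x) x := by
  have hx0 : 0 < x := lt_trans one_pos h1
  refine ⟨1, 0, fun k => ?_⟩
  rw [pq_one_add (by positivity) ((div_lt_one hx0).2 h1)]
  have hg : gaussMap (1/x) = Int.fract x := by
    unfold gaussMap; rw [one_div_one_div]
  rw [hg, zero_add]
  exact congrFun (pq_congr (Int.fract_fract x)) k

lemma tail_inv_pos {x : ℝ} (hx : Irrational x) (h0 : 0 < x) : TailEq (1/x) x := by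
  rcases lt_trichotomy x 1 with h | h | h
  · have h1 : 1 < 1/x := (one_lt_div h0).2 h
    have := tail_inv_gt_one h1
    rw [one_div_one_div] at this
    exact this.symm
  · exact absurd h (by exact_mod_cast hx.ne_int 1)
  · exact tail_inv_gt_one h

lemma tail_one_sub {u : ℝ} (hu : Irrational u) (h0 : 0 < u) (h1 : u < 1) :
    TailEq (1 - u) u := by
  have hune : u ≠ 0 := ne_of_gt h0
  have h1u : 1 < 1/u := (one_lt_div h0).2 h1
  set a : ℤ := ⌊1/u⌋ with ha
  set w : ℝ := gaussMap u with hwdef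
  have hw : w = 1/u - (a : ℝ) := by
    rw [hwdef]; unfold gaussMap; rw [← Int.self_sub_floor, ← ha]
  have hwirr : Irrational w := irr_gauss hu
  have hw0 : 0 < w := lt_of_le_of_ne (Int.fract_nonneg _) (Ne.symm hwirr.ne_zero)
  have hw1 : w < 1 := Int.fract_lt_one _
  have ha1 : 1 ≤ a := Int.le_floor.2 (by exact_mod_cast le_of_lt h1u)
  have h1mu0 : (0:ℝ) < 1 - u := by linarith
  have hsum : 1/u = (a:ℝ) + w := by rw [hw]; ring
  rcases eq_or_lt_of_le ha1 with haeq | ha2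
  · -- case a = 1
    have ha' : (a : ℝ) = 1 := by rw [← haeq]; norm_num
    have hw1u : (1:ℝ) + w = 1/u := by rw [hsum, ha']
    have h3 : u + u * w = 1 := by
      have h4 : u * (1 + w) = u * (1/u) := by rw [hw1u]
      rw [mul_one_div_cancel hune] at h4
      linear_combination h4
    have huw : u * w = 1 - u := by linarith
    have h1mu : gaussMap (1 - u) = gaussMap w := by
      unfold gaussMap
      have e1 : 1/(1-u) = 1/w + 1 := by
        rw [← huw, div_add_one (ne_of_gt hw0), hw1u, div_div]
      have e2 := Int.fract_add_intCast (1/w) 1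
      push_cast at e2
      rw [e1, e2]
    refine ⟨1, 2, fun k => ?_⟩
    rw [pq_one_add (by linarith) (by linarith), h1mu,
      show 2 + k = 1 + (1 + k) from by omega,
      pq_one_add (le_of_lt h0) h1, ← hwdef,
      pq_one_add (le_of_lt hw0) hw1]
  · -- case a ≥ 2
    have ha2' : (2:ℝ) ≤ (a:ℝ) := by exact_mod_cast ha2
    have hA1 : (1:ℝ) < (a:ℝ) - 1 + w := by linarith
    have hA0 : (0:ℝ) < (a:ℝ) - 1 + w := by linarith
    have hApos : (0:ℝ) < (a:ℝ) + w := by linarith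
    have hu_eq : u = 1/((a:ℝ) + w) := by rw [← hsum, one_div_one_div]
    set v : ℝ := 1/((a:ℝ) - 1 + w) with hv
    have hv0 : 0 < v := by rw [hv]; positivity
    have hv1 : v < 1 := by rw [hv, div_lt_one hA0]; linarith
    have e1 : 1/(1-u) = v + 1 := by
      rw [hu_eq, hv, one_sub_div (ne_of_gt hApos), one_div_div, div_add_one (ne_of_gt hA0),
        div_eq_div_iff (by linarith) (ne_of_gt hA0)]
      ring
    have hg1 : gaussMap (1 - u) = v := by
      unfold gaussMap
      have e2 := Int.fract_add_intCast v 1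
      push_cast at e2
      rw [e1, e2, Int.fract_eq_self.2 ⟨le_of_lt hv0, hv1⟩]
    have hg2 : gaussMap v = w := by
      unfold gaussMap
      rw [hv, one_div_one_div]
      have e3 : (a:ℝ) - 1 + w = w + ((a - 1 : ℤ) : ℝ) := by push_cast; ring
      rw [e3, Int.fract_add_intCast, Int.fract_eq_self.2 ⟨le_of_lt hw0, hw1⟩]
    refine ⟨2, 1, fun k => ?_⟩
    rw [show 2 + k = 1 + (1 + k) from by omega,
      pq_one_add (by linarith) (by linarith), hg1,
      pq_one_add (le_of_lt hv0) hv1, hg2,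
      pq_one_add (le_of_lt h0) h1, ← hwdef]

lemma tail_neg {x : ℝ} (hx : Irrational x) : TailEq (-x) x := by
  have hfu : Irrational (Int.fract x) := irr_fract hx
  have h0 : 0 < Int.fract x := lt_of_le_of_ne (Int.fract_nonneg x) (Ne.symm hfu.ne_zero)
  have h1 : Int.fract x < 1 := Int.fract_lt_one x
  have hcore : TailEq (1 - Int.fract x) (Int.fract x) := tail_one_sub hfu h0 h1
  have e1 : pq (-x) = pq (1 - Int.fract x) := by
    refine pq_congr ?_
    have e : Int.fract (1 - Int.fract x) = 1 - Int.fract x :=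
      Int.fract_eq_self.2 ⟨by linarith, by linarith⟩
    rw [Int.fract_neg hfu.ne_zero, e]
  have e2 : pq (Int.fract x) = pq x := pq_congr (Int.fract_fract x)
  exact (tailEq_of_pq_eq e1).trans (hcore.trans (tailEq_of_pq_eq e2))

lemma tail_inv {x : ℝ} (hx : Irrational x) : TailEq (1/x) x := by
  rcases lt_or_gt_of_ne hx.ne_zero with hneg | hpos
  · have hnx : Irrational (-x) := hx.neg
    have h1 : TailEq (1/(-x)) (-x) := tail_inv_pos hnx (by linarith)
    have h2 : TailEq (-(1/(-x))) (1/(-x)) :=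
      tail_neg (by simpa [one_div] using hnx.inv)
    have h3 : 1/x = -(1/(-x)) := by field_simp
    rw [h3]
    exact (h2.trans h1).trans (tail_neg hx)
  · exact tail_inv_pos hx hpos


lemma denom_ne_zero {y : ℝ} (hy : Irrational y) {c d : ℤ} (h : ¬(c = 0 ∧ d = 0)) :
    (c:ℝ) * y + d ≠ 0 := by
  rcases eq_or_ne c 0 with hc | hc
  · subst hc
    simp only [Int.cast_zero, zero_mul, zero_add]
    intro hd
    exact h ⟨rfl, by exact_mod_cast hd⟩
  · intro h0
    apply hy
    refine ⟨(-d : ℚ)/(c : ℚ), ?_⟩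
    have hc' : (c:ℝ) ≠ 0 := Int.cast_ne_zero.2 hc
    push_cast
    rw [div_eq_iff hc']
    linarith

lemma irr_moebius {y : ℝ} (hy : Irrational y) {a b c d : ℤ}
    (hdet : a * d - b * c ≠ 0) (hcd : (c:ℝ) * y + d ≠ 0) :
    Irrational (((a:ℝ) * y + b) / ((c:ℝ) * y + d)) := by
  rintro ⟨s, hs⟩
  have h1 : (s:ℝ) * ((c:ℝ) * y + d) = (a:ℝ) * y + b := (eq_div_iff hcd).1 hs
  rcases eq_or_ne ((a:ℝ) - (s:ℝ) * c) 0 with h2 | h2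
  · have h3 : (s:ℝ) * d - b = 0 := by linear_combination h1 + y * h2
    have h4 : ((a * d - b * c : ℤ) : ℝ) = 0 := by
      push_cast
      linear_combination (d:ℝ) * h2 + (c:ℝ) * h3
    exact hdet (by exact_mod_cast h4)
  · apply hy
    have h2' : ((a:ℚ) - s * c) ≠ 0 := by
      intro h0
      apply h2
      have := congrArg (Rat.cast : ℚ → ℝ) h0
      push_cast at this
      linarith
    refine ⟨(s * d - b)/((a:ℚ) - s * c), ?_⟩
    have h2'' : ((a:ℝ) - (s:ℝ) * c) ≠ 0 := h2
    push_cast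
    rw [div_eq_iff h2'']
    linear_combination h1

lemma key : ∀ N : ℕ, ∀ c : ℤ, c.natAbs ≤ N → ∀ a b d : ℤ, ∀ y : ℝ, Irrational y →
    (a * d - b * c = 1 ∨ a * d - b * c = -1) →
    TailEq (((a:ℝ) * y + b) / ((c:ℝ) * y + d)) y := by
  intro N
  induction N with
  | zero =>
    intro c hc a b d y hy hdet
    have hc0 : c = 0 := by omega
    subst hc0
    have taff : ∀ e : ℤ, TailEq (y + (e:ℝ)) y := fun e =>
      tailEq_of_pq_eq (pq_congr (Int.fract_add_intCast y e))
    have taffn : ∀ e : ℤ, TailEq (-y + (e:ℝ)) y := fun e =>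
      (tailEq_of_pq_eq (pq_congr (Int.fract_add_intCast (-y) e))).trans (tail_neg hy)
    simp only [mul_zero, sub_zero] at hdet
    rcases hdet with h | h
    · rcases Int.mul_eq_one_iff_eq_one_or_neg_one.1 h with ⟨rfl, rfl⟩ | ⟨rfl, rfl⟩
      · rw [show (((1:ℤ):ℝ) * y + (b:ℝ)) / (((0:ℤ):ℝ) * y + ((1:ℤ):ℝ)) = y + (b:ℝ) from by
          push_cast; ring]
        exact taff b
      · rw [show ((((-1):ℤ):ℝ) * y + (b:ℝ)) / (((0:ℤ):ℝ) * y + (((-1):ℤ):ℝ)) = y + ((-b:ℤ):ℝ)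
            from by push_cast; ring]
        exact taff (-b)
    · rcases Int.mul_eq_neg_one_iff_eq_one_or_neg_one.1 h with ⟨rfl, rfl⟩ | ⟨rfl, rfl⟩
      · rw [show (((1:ℤ):ℝ) * y + (b:ℝ)) / (((0:ℤ):ℝ) * y + (((-1):ℤ):ℝ)) = -y + ((-b:ℤ):ℝ)
            from by push_cast; ring]
        exact taffn (-b)
      · rw [show ((((-1):ℤ):ℝ) * y + (b:ℝ)) / (((0:ℤ):ℝ) * y + ((1:ℤ):ℝ)) = -y + (b:ℝ)
            from by push_cast; ring]
        exact taffn b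
  | succ N ih =>
    intro c hc a b d y hy hdet
    rcases Nat.lt_or_ge c.natAbs (N+1) with hlt | hge
    · exact ih c (by omega) a b d y hy hdet
    have hcN : c.natAbs = N + 1 := le_antisymm hc hge
    have hc0 : c ≠ 0 := by omega
    set q := a / c with hq
    set r := a % c with hrdef
    have har : a = c * q + r := by rw [hq, hrdef]; exact (Int.mul_ediv_add_emod a c).symm
    have hr0 : 0 ≤ r := Int.emod_nonneg a hc0
    have hrlt : r < |c| := Int.emod_lt_abs _ hc0
    have hrN : r.natAbs ≤ N := by
      rw [Int.abs_eq_natAbs] at hrlt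
      omega
    set b' := b - q * d with hb'
    have hr' : r = a - c * q := by omega
    have hdet2 : c * b' - d * r = 1 ∨ c * b' - d * r = -1 := by
      rcases hdet with h' | h'
      · right; rw [hb', hr']; linear_combination -h'
      · left; rw [hb', hr']; linear_combination -h'
    have hcdne : (c:ℝ) * y + (d:ℝ) ≠ 0 := denom_ne_zero hy (fun hp => hc0 hp.1)
    have hrb'ne0 : ¬(r = 0 ∧ b' = 0) := by
      rintro ⟨h1, h2⟩
      rw [h1, h2] at hdet2
      simp at hdet2
    have hrbne : (r:ℝ) * y + (b':ℝ) ≠ 0 := denom_ne_zero hy hrb'ne0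
    have hdet2' : c * b' - d * r ≠ 0 := by rcases hdet2 with h | h <;> omega
    have hwirr : Irrational (((c:ℝ) * y + d) / ((r:ℝ) * y + b')) :=
      irr_moebius hy hdet2' hrbne
    have htail_w : TailEq (((c:ℝ) * y + d) / ((r:ℝ) * y + b')) y :=
      ih r hrN c d b' y hy hdet2
    have ha' : (a:ℝ) = (c:ℝ) * q + r := by exact_mod_cast congrArg (Int.cast : ℤ → ℝ) har
    have hb'' : (b:ℝ) = (b':ℝ) + (q:ℝ) * d := by rw [hb']; push_cast; ring
    have hnum : (a:ℝ) * y + b = (q:ℝ) * ((c:ℝ) * y + d) + ((r:ℝ) * y + b') := by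
      rw [ha', hb'']; ring
    have hxeq : ((a:ℝ) * y + b) / ((c:ℝ) * y + d)
        = (q:ℝ) + 1 / (((c:ℝ) * y + d) / ((r:ℝ) * y + b')) := by
      rw [hnum, add_div, mul_div_assoc, div_self hcdne, mul_one, one_div_div]
    rw [hxeq]
    have t1 : pq ((q:ℝ) + 1 / (((c:ℝ) * y + d) / ((r:ℝ) * y + b')))
        = pq (1 / (((c:ℝ) * y + d) / ((r:ℝ) * y + b'))) :=
      pq_congr (Int.fract_intCast_add q _)
    exact (tailEq_of_pq_eq t1).trans ((tail_inv hwirr).trans htail_w)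


def Mrel (x y : ℝ) : Prop :=
  ∃ a b c d : ℤ, (a * d - b * c = 1 ∨ a * d - b * c = -1) ∧
    x = ((a : ℝ) * y + b) / ((c : ℝ) * y + d)

lemma Mrel.notboth {a b c d : ℤ} (hdet : a * d - b * c = 1 ∨ a * d - b * c = -1) :
    ¬(c = 0 ∧ d = 0) := by
  rintro ⟨rfl, rfl⟩
  simp at hdet

lemma Mrel.notboth' {a b c d : ℤ} (hdet : a * d - b * c = 1 ∨ a * d - b * c = -1) :
    ¬(-c = 0 ∧ a = 0) := by
  rintro ⟨h1, rfl⟩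
  have : c = 0 := by omega
  subst this
  simp at hdet

lemma Mrel.symm {x y : ℝ} (hx : Irrational x) (hy : Irrational y) (h : Mrel x y) : Mrel y x := by
  obtain ⟨a, b, c, d, hdet, he⟩ := h
  have hcd : (c:ℝ) * y + d ≠ 0 := denom_ne_zero hy (Mrel.notboth hdet)
  have hca : ((-c : ℤ):ℝ) * x + (a:ℝ) ≠ 0 := denom_ne_zero hx (Mrel.notboth' hdet)
  refine ⟨d, -b, -c, a, ?_, ?_⟩
  · rcases hdet with h' | h'
    · exact Or.inl (by linear_combination h')
    · exact Or.inr (by linear_combination h')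
  · have h1 : x * ((c:ℝ) * y + d) = (a:ℝ) * y + b := by
      rw [he, div_mul_cancel₀ _ hcd]
    rw [eq_div_iff hca]
    push_cast at hca ⊢
    linear_combination -h1
lemma Mrel.trans {x y z : ℝ} (hz : Irrational z) (h1 : Mrel x y) (h2 : Mrel y z) : Mrel x z := by
  obtain ⟨a, b, c, d, hd1, he1⟩ := h1
  obtain ⟨a', b', c', d', hd2, he2⟩ := h2
  have h2ne : (c':ℝ) * z + d' ≠ 0 := denom_ne_zero hz (Mrel.notboth hd2)
  have hdet2' : a' * d' - b' * c' ≠ 0 := by rcases hd2 with h | h <;> omega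
  have hy' : Irrational y := by rw [he2]; exact irr_moebius hz hdet2' h2ne
  have hcd : (c:ℝ) * y + d ≠ 0 := denom_ne_zero hy' (Mrel.notboth hd1)
  have hdetm : (a*a' + b*c') * (c*b' + d*d') - (a*b' + b*d') * (c*a' + d*c')
      = (a*d - b*c) * (a'*d' - b'*c') := by ring
  refine ⟨a*a' + b*c', a*b' + b*d', c*a' + d*c', c*b' + d*d', ?_, ?_⟩
  · rcases hd1 with h1' | h1'
    · rcases hd2 with h2' | h2'
      · exact Or.inl (by rw [hdetm, h1', h2']; norm_num)
      · exact Or.inr (by rw [hdetm, h1', h2']; norm_num)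
    · rcases hd2 with h2' | h2'
      · exact Or.inr (by rw [hdetm, h1', h2']; norm_num)
      · exact Or.inl (by rw [hdetm, h1', h2']; norm_num)
  · have hnew : ((c*a' + d*c' : ℤ):ℝ) * z + ((c*b' + d*d' : ℤ):ℝ) ≠ 0 :=
      denom_ne_zero hz (Mrel.notboth (by
        rcases hd1 with h1' | h1' <;> rcases hd2 with h2' | h2'
        · exact Or.inl (by rw [hdetm, h1', h2']; norm_num)
        · exact Or.inr (by rw [hdetm, h1', h2']; norm_num)
        · exact Or.inr (by rw [hdetm, h1', h2']; norm_num)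
        · exact Or.inl (by rw [hdetm, h1', h2']; norm_num)))
    rw [he1, he2]
    rw [div_eq_div_iff (by rw [he2] at hcd; exact hcd) hnew]
    push_cast
    rw [mul_div_assoc', mul_div_assoc', div_add' _ _ _ h2ne, div_add' _ _ _ h2ne, div_mul_eq_mul_div,
      mul_div_assoc', div_left_inj' h2ne]
    ring

lemma M_fract (x : ℝ) : Mrel x (Int.fract x) := by
  refine ⟨1, ⌊x⌋, 0, 1, Or.inl (by ring), ?_⟩
  push_cast
  rw [one_mul, zero_mul, zero_add, div_one, Int.fract]
  ring

lemma M_gauss {u : ℝ} (hu : Irrational u) : Mrel u (gaussMap u) := by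
  refine ⟨0, 1, 1, ⌊1/u⌋, Or.inr (by ring), ?_⟩
  push_cast
  rw [zero_mul, zero_add, one_mul]
  have hg : gaussMap u = 1/u - (⌊1/u⌋ : ℝ) := by
    unfold gaussMap; rw [← Int.self_sub_floor]
  rw [hg]
  have : 1/u - (⌊1/u⌋ : ℝ) + (⌊1/u⌋ : ℝ) = 1/u := by ring
  rw [this, one_div_one_div]

lemma M_iter {x : ℝ} (hx : Irrational x) (m : ℕ) :
    Mrel x (gaussMap^[m] (Int.fract x)) := by
  induction m with
  | zero => exact M_fract x
  | succ m ih =>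
    rw [Function.iterate_succ_apply']
    exact Mrel.trans (irr_gauss (irr_iter hx m)) ih (M_gauss (irr_iter hx m))

open GenContFract in
lemma of_s_get? {u : ℝ} (hu : Irrational u) :
    ∀ n, (GenContFract.of u).s.get? n = some ⟨1, ((pq u n : ℤ) : ℝ)⟩ := by
  intro n
  induction n generalizing u with
  | zero =>
    have hf : Int.fract u ≠ 0 := (irr_fract hu).ne_zero
    have h := GenContFract.of_s_head hf
    have hh : (GenContFract.of u).s.head = (GenContFract.of u).s.get? 0 := rfl
    rw [hh] at h
    rw [h]
    congr 2
    unfold pq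
    simp only [Function.iterate_zero, id_eq]
    rw [one_div]
  | succ n ih =>
    rw [GenContFract.of_s_succ, ih ((irr_fract hu).inv)]
    congr 2
    have hfr : Int.fract ((Int.fract u)⁻¹) = gaussMap (Int.fract u) := by
      unfold gaussMap; rw [one_div]
    have : pq ((Int.fract u)⁻¹) n = pq u (n + 1) := by
      rw [pq_shift]
      exact congrFun (pq_congr (by rw [hfr]; exact (Int.fract_fract _).symm)) n
    rw [this]

lemma cf_unique {u v : ℝ} (hu : Irrational u) (hv : Irrational v) (hf : ⌊u⌋ = ⌊v⌋)
    (h : ∀ k, pq u k = pq v k) : u = v := by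
  have hofs : GenContFract.of u = GenContFract.of v := by
    have hs : (GenContFract.of u).s = (GenContFract.of v).s :=
      Stream'.Seq.ext fun n => by rw [of_s_get? hu n, of_s_get? hv n, h n]
    have hh : (GenContFract.of u).h = (GenContFract.of v).h := by
      rw [GenContFract.of_h_eq_floor, GenContFract.of_h_eq_floor, hf]
    exact GenContFract.ext hh hs
  have t1 := GenContFract.of_convergence u
  have t2 := GenContFract.of_convergence v
  rw [hofs] at t1
  exact tendsto_nhds_unique t1 t2

end Serret

open Serret in
/-- Serret's theorem: two irrationals `x, y` are related by a modular
transformation `x = (ay+b)/(cy+d)`, `ad - bc = ±1`, iff their continued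
fraction expansions eventually coincide. -/
theorem modular_equiv_iff_tail_equiv :
    ∀ x y : ℝ, Irrational x → Irrational y →
      ((∃ a b c d : ℤ, (a * d - b * c = 1 ∨ a * d - b * c = -1) ∧
          x = ((a : ℝ) * y + b) / ((c : ℝ) * y + d)) ↔
        (∃ m n : ℕ, ∀ k : ℕ, pq x (m + k) = pq y (n + k))) := by
  intro x y hx hy
  constructor
  · rintro ⟨a, b, c, d, hdet, he⟩
    rw [he]
    exact key c.natAbs c le_rfl a b d y hy hdet
  · rintro ⟨m, n, h⟩
    have hpq : ∀ k, pq (gaussMap^[m] (Int.fract x)) k = pq (gaussMap^[n] (Int.fract y)) k := by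
      intro k
      rw [← pq_iter x m k, ← pq_iter y n k]
      exact h k
    have hfl : ⌊gaussMap^[m] (Int.fract x)⌋ = ⌊gaussMap^[n] (Int.fract y)⌋ := by
      rw [Int.floor_eq_zero_iff.2 (Set.mem_Ico.2 ⟨(iter_mem m x).1, (iter_mem m x).2⟩),
        Int.floor_eq_zero_iff.2 (Set.mem_Ico.2 ⟨(iter_mem n y).1, (iter_mem n y).2⟩)]
    have huv := cf_unique (irr_iter hx m) (irr_iter hy n) hfl hpq
    have M1 : Mrel x (gaussMap^[n] (Int.fract y)) := huv ▸ M_iter hx m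
    have M2 : Mrel (gaussMap^[n] (Int.fract y)) y :=
      Mrel.symm hy (irr_iter hy n) (M_iter hy n)
    exact Mrel.trans hy M1 M2
end

section
/- Let H be a Hilbert space, S : H → H an isometry, and v, w ∈ H with Sv = v. If the family ((S*)^n w)_{n≥1} is orthonormal (in particular ‖(S*)^n w‖ = 1 for all n while (S*)^n w are pairwise orthogonal), then ⟨v, w⟩ = 0. -/
open ContinuousLinearMap

/-- If `S` is an isometry on a Hilbert space, `Sv = v`, and the vectors
`(S*)ⁿ w`, `n ≥ 1`, form an orthonormal family, then `⟨v, w⟩ = 0`. -/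
theorem inner_eq_zero_of_fixed_and_chain
    {H : Type*} [NormedAddCommGroup H] [InnerProductSpace ℂ H] [CompleteSpace H]
    (S : H →L[ℂ] H) (hS : ∀ x : H, ‖S x‖ = ‖x‖)
    (v w : H) (hv : S v = v)
    (hw : Orthonormal ℂ (fun n : ℕ => (adjoint S ^ (n + 1)) w)) :
    inner ℂ v w = (0 : ℂ) := by
  have key : ∀ n : ℕ, (inner ℂ v ((adjoint S ^ n) w) : ℂ) = inner ℂ v w := by
    intro n
    induction n with
    | zero => simp
    | succ n ih =>
      rw [pow_succ', ContinuousLinearMap.mul_apply, adjoint_inner_right, hv, ih]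
  have hconst : ∀ n : ℕ,
      ‖(inner ℂ ((fun n : ℕ => (adjoint S ^ (n + 1)) w) n) v : ℂ)‖ ^ 2 = ‖(inner ℂ v w : ℂ)‖ ^ 2 := by
    intro n
    rw [show (inner ℂ ((adjoint S ^ (n + 1)) w) v : ℂ) = starRingEnd ℂ (inner ℂ v ((adjoint S ^ (n + 1)) w)) from (inner_conj_symm _ _).symm, RCLike.norm_conj, key (n + 1)]
  have hsum := hw.inner_products_summable (𝕜 := ℂ) v
  have h0 : Filter.Tendsto
      (fun n : ℕ => ‖(inner ℂ ((adjoint S ^ (n + 1)) w) v : ℂ)‖ ^ 2)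
      Filter.atTop (nhds 0) := hsum.tendsto_atTop_zero
  have h0' : Filter.Tendsto (fun _ : ℕ => ‖(inner ℂ v w : ℂ)‖ ^ 2)
      Filter.atTop (nhds 0) := by
    refine h0.congr fun n => ?_
    exact hconst n
  have := tendsto_nhds_unique h0' tendsto_const_nhds
  have hn : ‖(inner ℂ v w : ℂ)‖ ^ 2 = 0 := this.symm
  have : ‖(inner ℂ v w : ℂ)‖ = 0 := by
    nlinarith [norm_nonneg (inner ℂ v w : ℂ)]
  exact norm_eq_zero.mp this
end
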